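/- Let p be a prime with p ≡ 2 (mod 3), let n be odd, and let w = pʳ·m with r odd and p ∤ m. Then there are no integers a, b with wⁿ = a² + b² − ab. -/
import Mathlib

private lemma key_dvd (p : ℕ) (hp : p.Prime) (hp2 : p % 3 = 2) (a b : ℤ)
    (h : (p : ℤ) ∣ a ^ 2 + b ^ 2 - a * b) : (p : ℤ) ∣ a ∧ (p : ℤ) ∣ b := by
  haveI := Fact.mk hp
  set A : ZMod p := (a : ZMod p) with hA
  set B : ZMod p := (b : ZMod p) with hB
  have h0 : A ^ 2 + B ^ 2 - A * B = 0 := by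
    have := (ZMod.intCast_zmod_eq_zero_iff_dvd _ p).2 h
    push_cast at this
    exact this
  have hb : B = 0 := by
    by_contra hBne
    set x : ZMod p := A * B⁻¹ with hx
    have h1 : B * B⁻¹ = 1 := mul_inv_cancel₀ hBne
    have hxeq : x ^ 2 - x + 1 = 0 := by
      have h2 : x ^ 2 - x + 1 = (A ^ 2 + B ^ 2 - A * B) * B⁻¹ ^ 2 := by
        rw [hx]
        linear_combination (A * B⁻¹ - B * B⁻¹ - 1) * h1
      rw [h2, h0, zero_mul]
    have hne3 : p ≠ 3 := by omega
    have h3ne : (3 : ZMod p) ≠ 0 := by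
      intro h3
      have : (p : ℕ) ∣ 3 := by
        have := (ZMod.natCast_eq_zero_iff 3 p).1 (by exact_mod_cast h3)
        exact this
      have := (Nat.prime_dvd_prime_iff_eq hp Nat.prime_three).1 this
      exact hne3 this
    have hy3 : (x * x) ^ 3 = 1 := by
      have hx3 : x ^ 3 = -1 := by linear_combination (x + 1) * hxeq
      linear_combination (x ^ 3 - 1) * hx3
    have hy1 : x * x ≠ 1 := by
      intro hy
      apply h3ne
      linear_combination (x + 2) * hxeq - (x + 1) * hy
    have hy0 : x * x ≠ 0 := by
      intro h'
      rw [h'] at hy3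
      simp at hy3
    haveI := Fact.mk Nat.prime_three
    have hord : orderOf (x * x) = 3 := orderOf_eq_prime hy3 hy1
    have hdvd : orderOf (x * x) ∣ p - 1 :=
      orderOf_dvd_of_pow_eq_one (ZMod.pow_card_sub_one_eq_one hy0)
    rw [hord] at hdvd
    obtain ⟨k, hk⟩ := hdvd
    have h2le := hp.two_le
    omega
  have ha : A = 0 := by
    have : A ^ 2 = 0 := by rw [hb] at h0; linear_combination h0
    exact pow_eq_zero_iff (n := 2) (by norm_num) |>.1 this
  exact ⟨(ZMod.intCast_zmod_eq_zero_iff_dvd a p).1 ha,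
    (ZMod.intCast_zmod_eq_zero_iff_dvd b p).1 hb⟩

private lemma descent (p : ℕ) (hp : p.Prime) (hp2 : p % 3 = 2) :
    ∀ s : ℕ, Odd s → ∀ c a b : ℤ, ¬ (p : ℤ) ∣ c →
      (p : ℤ) ^ s * c ≠ a ^ 2 + b ^ 2 - a * b := by
  intro s
  induction s using Nat.strong_induction_on with
  | _ s ih =>
    intro hs c a b hc heq
    obtain ⟨k, hk⟩ := hs
    have hs0 : s ≠ 0 := by omega
    have hpne : (p : ℤ) ≠ 0 := by exact_mod_cast hp.ne_zero
    have hpd : (p : ℤ) ∣ a ^ 2 + b ^ 2 - a * b := by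
      rw [← heq]
      exact dvd_mul_of_dvd_left (dvd_pow_self _ hs0) _
    obtain ⟨ha, hb⟩ := key_dvd p hp hp2 a b hpd
    obtain ⟨a', rfl⟩ := ha
    obtain ⟨b', rfl⟩ := hb
    rcases Nat.eq_zero_or_pos k with rfl | hk0
    · -- s = 1
      have hs1 : s = 1 := by omega
      subst hs1
      apply hc
      have h2 : (p : ℤ) * c = (p : ℤ) * ((p : ℤ) * (a' ^ 2 + b' ^ 2 - a' * b')) := by
        rw [pow_one] at heq
        linear_combination heq
      have := mul_left_cancel₀ hpne h2
      exact this ▸ Dvd.intro _ rfl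
    · -- s ≥ 3
      have hlt : s - 2 < s := by omega
      have hodd : Odd (s - 2) := ⟨k - 1, by omega⟩
      apply ih (s - 2) hlt hodd c a' b' hc
      have hsplit : (p : ℤ) ^ s = (p : ℤ) ^ 2 * (p : ℤ) ^ (s - 2) := by
        rw [← pow_add]; congr 1; omega
      have h2 : (p : ℤ) ^ 2 * ((p : ℤ) ^ (s - 2) * c)
          = (p : ℤ) ^ 2 * (a' ^ 2 + b' ^ 2 - a' * b') := by
        rw [hsplit] at heq
        linear_combination heq
      exact mul_left_cancel₀ (pow_ne_zero 2 hpne) h2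

theorem stmt_5 (p : ℕ) (hp : p.Prime) (hp2 : p % 3 = 2) (r n m : ℕ)
    (hr : Odd r) (hn : Odd n) (hm : ¬ p ∣ m) :
    ¬ ∃ a b : ℤ, ((p : ℤ) ^ r * m) ^ n = a ^ 2 + b ^ 2 - a * b := by
  rintro ⟨a, b, heq⟩
  have hrw : ((p : ℤ) ^ r * m) ^ n = (p : ℤ) ^ (r * n) * (m : ℤ) ^ n := by
    rw [mul_pow, ← pow_mul]
  rw [hrw] at heq
  have hmn : ¬ (p : ℤ) ∣ (m : ℤ) ^ n := by
    intro hd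
    apply hm
    have : (p : ℕ) ∣ m ^ n := by exact_mod_cast (by push_cast at hd ⊢; exact hd : (p:ℤ) ∣ ((m ^ n : ℕ) : ℤ))
    exact hp.dvd_of_dvd_pow this
  exact descent p hp hp2 (r * n) (hr.mul hn) ((m : ℤ) ^ n) a b hmn heq
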